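/- Let R : ℝ² → ℝ be a smooth, radially symmetric, rapidly decaying function. Then ∫_{ℝ²} (Δ(R²))·R·(R + ρ ∂_ρ R) dξ = −2π ∫_0^∞ ((R²)'(ρ))² ρ dρ, where the right-hand side integral is over the radial variable ρ. -/

import Mathlib

open MeasureTheory Set

noncomputable section

abbrev E2 : Type := EuclideanSpace ℝ (Fin 2)

/-- The Laplacian on `ℝ²`, as the trace of the second derivative. -/
def lap {F : Type*} [NormedAddCommGroup F] [NormedSpace ℝ F] (f : E2 → F) (x : E2) : F :=
  ∑ i : Fin 2, iteratedFDeriv ℝ 2 f x ![EuclideanSpace.single i 1, EuclideanSpace.single i 1]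

namespace Stmt1Aux

def e0 : E2 := EuclideanSpace.single 0 1

lemma norm_e0 : ‖e0‖ = 1 := by simp [e0, EuclideanSpace.norm_single]

def Lmap : ℝ →L[ℝ] E2 := ContinuousLinearMap.toSpanSingleton ℝ e0

lemma Lmap_apply (t : ℝ) : Lmap t = t • e0 := rfl

lemma norm_Lmap (t : ℝ) : ‖Lmap t‖ = |t| := by
  rw [Lmap_apply, norm_smul, norm_e0, mul_one, Real.norm_eq_abs]

def wmap (R : SchwartzMap E2 ℝ) : SchwartzMap ℝ ℝ :=
  SchwartzMap.compCLM ℝ (Lmap.hasTemperateGrowth)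
    ⟨1, 1, fun t => by rw [norm_Lmap]; simp [Real.norm_eq_abs]⟩ R

lemma wmap_apply (R : SchwartzMap E2 ℝ) (t : ℝ) : wmap R t = R (t • e0) := rfl

lemma schwartz_htg (f : SchwartzMap ℝ ℝ) :
    Function.HasTemperateGrowth (f : ℝ → ℝ) := by
  refine ⟨f.smooth', fun n => ⟨0, SchwartzMap.seminorm ℝ 0 n f, fun x => ?_⟩⟩
  simpa using f.norm_iteratedFDeriv_le_seminorm ℝ n x

lemma htg_id : Function.HasTemperateGrowth (fun x : ℝ => x) := by
  have h : (fun x : ℝ => x) = fun x => (ContinuousLinearMap.id ℝ ℝ) x := rfl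
  rw [h]; exact (ContinuousLinearMap.id ℝ ℝ).hasTemperateGrowth

def mulS (f g : SchwartzMap ℝ ℝ) : SchwartzMap ℝ ℝ :=
  SchwartzMap.bilinLeftCLM (ContinuousLinearMap.mul ℝ ℝ) (schwartz_htg g) f

lemma mulS_apply (f g : SchwartzMap ℝ ℝ) (x : ℝ) : mulS f g x = f x * g x := rfl

def xmul (f : SchwartzMap ℝ ℝ) : SchwartzMap ℝ ℝ :=
  SchwartzMap.bilinLeftCLM (ContinuousLinearMap.mul ℝ ℝ) htg_id f

lemma xmul_apply (f : SchwartzMap ℝ ℝ) (x : ℝ) : xmul f x = f x * x := rfl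

lemma schwartz_hasDerivAt (f : SchwartzMap ℝ ℝ) (t : ℝ) :
    HasDerivAt f (SchwartzMap.derivCLM ℝ ℝ f t) t := by
  rw [SchwartzMap.derivCLM_apply]
  exact (f.differentiable.differentiableAt).hasDerivAt

lemma hasFDerivAt_norm' {ξ : E2} (hξ : ξ ≠ 0) :
    HasFDerivAt (fun x : E2 => ‖x‖) (‖ξ‖⁻¹ • (innerSL ℝ ξ)) ξ := by
  have hρ : ‖ξ‖ ≠ 0 := norm_ne_zero_iff.2 hξ
  have h1 : HasFDerivAt (fun x : E2 => ‖x‖ ^ 2) (2 • (innerSL ℝ ξ)) ξ :=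
    (hasStrictFDerivAt_norm_sq ξ).hasFDerivAt
  have h2 : HasDerivAt Real.sqrt (1 / (2 * Real.sqrt (‖ξ‖ ^ 2))) (‖ξ‖ ^ 2) :=
    Real.hasDerivAt_sqrt (by positivity)
  have h3 := h2.comp_hasFDerivAt ξ h1
  rw [show (Real.sqrt ∘ fun x : E2 => ‖x‖ ^ 2) = fun x : E2 => ‖x‖ from
    funext fun x => Real.sqrt_sq (norm_nonneg x)] at h3
  refine h3.congr_fderiv ?_
  rw [Real.sqrt_sq (norm_nonneg ξ)]
  ext v
  simp only [ContinuousLinearMap.smul_apply, smul_eq_mul]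
  rw [nsmul_eq_mul]
  field_simp
  ring

def iota : E2 →L[ℝ] (E2 →L[ℝ] ℝ) :=
  LinearMap.toContinuousLinearMap
    { toFun := fun x => innerSL ℝ x
      map_add' := fun x y => by ext v; simp [inner_add_left]
      map_smul' := fun c x => by ext v; simp [inner_smul_left] }

lemma iota_apply (x v : E2) : iota x v = (inner ℝ x v : ℝ) := rfl

lemma radial_hasFDerivAt {h : ℝ → ℝ} {h' : ℝ} {ξ : E2} (hξ : ξ ≠ 0)
    (hd : HasDerivAt h h' ‖ξ‖) :
    HasFDerivAt (fun x : E2 => h ‖x‖) ((h' * ‖ξ‖⁻¹) • innerSL ℝ ξ) ξ := by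
  have h3 := hd.comp_hasFDerivAt ξ (hasFDerivAt_norm' hξ)
  refine h3.congr_fderiv ?_
  rw [smul_smul, mul_comm]

lemma key_gradient {f : E2 → ℝ} {h : ℝ → ℝ} {h' : ℝ} {ξ : E2} (hξ : ξ ≠ 0)
    (hf : ∀ x, f x = h ‖x‖) (hd : HasDerivAt h h' ‖ξ‖) :
    (inner ℝ ξ (gradient f ξ) : ℝ) = h' * ‖ξ‖ := by
  have hρ : ‖ξ‖ ≠ 0 := norm_ne_zero_iff.2 hξ
  have h1 : HasFDerivAt f ((h' * ‖ξ‖⁻¹) • innerSL ℝ ξ) ξ := by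
    have := radial_hasFDerivAt hξ hd
    rwa [show (fun x : E2 => h ‖x‖) = f from (funext hf).symm] at this
  have h2 : HasGradientAt f ((h' * ‖ξ‖⁻¹) • ξ) ξ := by
    rw [hasGradientAt_iff_hasFDerivAt]
    refine h1.congr_fderiv ?_
    ext v
    simp [InnerProductSpace.toDual_apply_apply, inner_smul_left]
  rw [h2.gradient, inner_smul_right, real_inner_self_eq_norm_sq]
  field_simp

lemma key_lap {f : E2 → ℝ} {u du ddu : ℝ → ℝ}
    (hu : ∀ t, HasDerivAt u (du t) t) (hdu : ∀ t, HasDerivAt du (ddu t) t)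
    (hf : ∀ x, f x = u ‖x‖) {ξ : E2} (hξ : ξ ≠ 0) :
    lap f ξ = ddu ‖ξ‖ + du ‖ξ‖ * ‖ξ‖⁻¹ := by
  have hρ : ‖ξ‖ ≠ 0 := norm_ne_zero_iff.2 hξ
  set ρ := ‖ξ‖ with hρdef
  have hF : ∀ x : E2, x ≠ 0 → HasFDerivAt f ((du ‖x‖ * ‖x‖⁻¹) • innerSL ℝ x) x := by
    intro x hx
    have := radial_hasFDerivAt hx (hu ‖x‖)
    rwa [show (fun y : E2 => u ‖y‖) = f from (funext hf).symm] at this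
  set Φ : E2 → (E2 →L[ℝ] ℝ) := fun x => (du ‖x‖ * ‖x‖⁻¹) • iota x with hΦdef
  have hev : fderiv ℝ f =ᶠ[nhds ξ] Φ := by
    filter_upwards [IsOpen.mem_nhds isOpen_compl_singleton hξ] with x hx
    rw [(hF x hx).fderiv]
    rfl
  set c : ℝ := (ddu ρ * ρ⁻¹ + du ρ * (-(ρ^2)⁻¹)) * ρ⁻¹ with hc
  have hσ : HasFDerivAt (fun x : E2 => du ‖x‖ * ‖x‖⁻¹) (c • innerSL ℝ ξ) ξ :=
    radial_hasFDerivAt hξ ((hdu ρ).mul (hasDerivAt_inv hρ))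
  have hΦ' : HasFDerivAt Φ
      ((du ρ * ρ⁻¹) • iota + (c • innerSL ℝ ξ).smulRight (iota ξ)) ξ :=
    hσ.smul iota.hasFDerivAt
  have hD : fderiv ℝ (fderiv ℝ f) ξ
      = (du ρ * ρ⁻¹) • iota + (c • innerSL ℝ ξ).smulRight (iota ξ) := by
    rw [hev.fderiv_eq, hΦ'.fderiv]
  unfold lap
  have happ : ∀ i : Fin 2,
      iteratedFDeriv ℝ 2 f ξ ![EuclideanSpace.single i 1, EuclideanSpace.single i 1]
        = (du ρ * ρ⁻¹) * (inner ℝ (EuclideanSpace.single i (1:ℝ)) (EuclideanSpace.single i (1:ℝ)) : ℝ)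
          + c * (inner ℝ ξ (EuclideanSpace.single i (1:ℝ)) : ℝ)
              * (inner ℝ ξ (EuclideanSpace.single i (1:ℝ)) : ℝ) := by
    intro i
    rw [iteratedFDeriv_two_apply, hD]
    simp only [ContinuousLinearMap.add_apply, ContinuousLinearMap.smul_apply,
      ContinuousLinearMap.smulRight_apply, Matrix.cons_val_zero, Matrix.cons_val_one,
      Matrix.head_cons, ContinuousLinearMap.coe_smul', Pi.smul_apply]
    rw [iota_apply, iota_apply]
    simp only [smul_eq_mul, innerSL_apply_apply]
  rw [Finset.sum_congr rfl (fun i _ => happ i)]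
  rw [Finset.sum_add_distrib]
  have h1 : ∀ i : Fin 2,
      (inner ℝ (EuclideanSpace.single i (1:ℝ)) (EuclideanSpace.single i (1:ℝ)) : ℝ) = 1 := by
    intro i; simp [EuclideanSpace.inner_single_right, EuclideanSpace.single_apply]
  have h2 : ∀ i : Fin 2, (inner ℝ ξ (EuclideanSpace.single i (1:ℝ)) : ℝ) = ξ i := by
    intro i; simp [EuclideanSpace.inner_single_right]
  simp only [h1, h2, mul_one]
  have h3 : ∑ i : Fin 2, c * ξ i * ξ i = c * ρ^2 := by
    simp only [mul_assoc]
    rw [← Finset.mul_sum]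
    congr 1
    have h4 : ∑ i : Fin 2, ξ i * ξ i = ∑ i : Fin 2, (ξ i)^2 := by
      apply Finset.sum_congr rfl; intro i _; ring
    rw [h4, hρdef, EuclideanSpace.norm_eq, Real.sq_sqrt (by positivity)]
    simp [sq_abs]
  rw [h3]
  simp only [Finset.sum_const, Finset.card_univ, Fintype.card_fin, nsmul_eq_mul,
    Nat.cast_ofNat]
  rw [hc]
  field_simp
  ring

lemma vol_ball_E2 : volume (Metric.ball (0:E2) 1) = ENNReal.ofReal Real.pi := by
  rw [EuclideanSpace.volume_ball]
  norm_num [Real.Gamma_two, Real.sq_sqrt Real.pi_pos.le]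

lemma schwartz_tendsto_atTop (f : SchwartzMap ℝ ℝ) :
    Filter.Tendsto (fun x => f x) Filter.atTop (nhds 0) := by
  obtain ⟨C, -, hC⟩ := f.decay 1 0
  have h : ∀ᶠ x in Filter.atTop, |f x| ≤ C / x := by
    filter_upwards [Filter.eventually_gt_atTop 0] with x hx
    have h2 := hC x
    simp only [norm_iteratedFDeriv_zero, Real.norm_eq_abs, pow_one] at h2
    rw [abs_of_pos hx] at h2
    rw [le_div_iff₀ hx, mul_comm]
    exact h2
  have h0 : Filter.Tendsto (fun x : ℝ => C / x) Filter.atTop (nhds 0) :=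
    tendsto_const_nhds.div_atTop Filter.tendsto_id
  refine squeeze_zero_norm' ?_ h0
  simpa only [Real.norm_eq_abs] using h

end Stmt1Aux

open Stmt1Aux

/-- For a smooth, radially symmetric, rapidly decaying `R : ℝ² → ℝ` with radial profile `r`,
`∫_{ℝ²} Δ(R²) · R · (R + ρ ∂_ρ R) dξ = −2π ∫₀^∞ ((R²)'(ρ))² ρ dρ`. -/
theorem stmt1 (R : SchwartzMap E2 ℝ) (r : ℝ → ℝ)
    (hrad : ∀ x y : E2, ‖x‖ = ‖y‖ → R x = R y)
    (hprof : ∀ x : E2, R x = r ‖x‖) :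
    ∫ ξ : E2, lap (fun x => (R x) ^ 2) ξ *
        (R ξ * (R ξ + (inner ℝ ξ (gradient (fun x => R x) ξ) : ℝ)))
      = -2 * Real.pi * ∫ ρ in Ioi (0 : ℝ), (deriv (fun s => (r s) ^ 2) ρ) ^ 2 * ρ := by
  set w : SchwartzMap ℝ ℝ := wmap R with hwdef
  have hw : ∀ t, w t = R (t • e0) := wmap_apply R
  have hRw : ∀ x : E2, R x = w ‖x‖ := by
    intro x
    rw [hw]
    apply hrad
    rw [norm_smul, norm_e0, mul_one, Real.norm_eq_abs, abs_norm]
  set dw : SchwartzMap ℝ ℝ := SchwartzMap.derivCLM ℝ ℝ w with hdwdef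
  set u : SchwartzMap ℝ ℝ := mulS w w with hudef
  set du : SchwartzMap ℝ ℝ := SchwartzMap.derivCLM ℝ ℝ u with hdudef
  set ddu : SchwartzMap ℝ ℝ := SchwartzMap.derivCLM ℝ ℝ du with hddudef
  have hu' : ∀ t, HasDerivAt u (du t) t := schwartz_hasDerivAt u
  have hdu' : ∀ t, HasDerivAt du (ddu t) t := schwartz_hasDerivAt du
  have hw' : ∀ t, HasDerivAt w (dw t) t := schwartz_hasDerivAt w
  -- du = 2 w dw
  have du_eq : ∀ t, du t = 2 * w t * dw t := by
    intro t
    have h1 : HasDerivAt u (dw t * w t + w t * dw t) t := by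
      have := (hw' t).mul (hw' t)
      have he : (fun s => w s * w s) = (u : ℝ → ℝ) := by
        funext s; rw [mulS_apply]
      rw [← he]; exact this
    rw [(hu' t).unique h1]; ring
  -- profile for R^2
  have hR2 : ∀ x : E2, (R x)^2 = u ‖x‖ := by
    intro x; rw [hRw x, mulS_apply]; ring
  -- pointwise integrand equality a.e.
  set F : ℝ → ℝ := fun ρ => (ddu ρ + du ρ * ρ⁻¹) * (w ρ * (w ρ + dw ρ * ρ)) with hFdef
  have hzero : volume ({(0:E2)} : Set E2) = 0 := measure_singleton 0
  have hae : (fun ξ : E2 => lap (fun x => (R x) ^ 2) ξ *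
        (R ξ * (R ξ + (inner ℝ ξ (gradient (fun x => R x) ξ) : ℝ))))
      =ᶠ[ae (volume : Measure E2)] (fun ξ => F ‖ξ‖) := by
    apply Filter.eventuallyEq_of_mem (compl_mem_ae_iff.2 hzero)
    intro ξ hξ'
    have hξ : ξ ≠ 0 := hξ'
    have hL := key_lap hu' hdu' hR2 hξ
    have hG := key_gradient hξ (f := fun x : E2 => R x) hRw (hw' ‖ξ‖)
    simp only
    rw [hL, hG, hRw ξ, hFdef]
  rw [integral_congr_ae hae]
  rw [integral_fun_norm_addHaar (volume : Measure E2) F]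
  -- 1D reduction
  set A : SchwartzMap ℝ ℝ := xmul du with hAdef
  have hA : ∀ t, A t = du t * t := xmul_apply du
  set H : ℝ → ℝ := fun y => (du y + ddu y * y) * (u y + A y / 2) with hHdef
  have hIoi1 : ∫ y in Ioi (0:ℝ), y ^ (Module.finrank ℝ E2 - 1) • F y = ∫ y in Ioi (0:ℝ), H y := by
    apply setIntegral_congr_fun measurableSet_Ioi
    intro y hy
    have hy0 : y ≠ 0 := ne_of_gt hy
    simp only [smul_eq_mul, hFdef, hHdef, finrank_euclideanSpace, Fintype.card_fin]
    rw [hA, du_eq y, mulS_apply]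
    field_simp
    ring
  -- FTC on (0, ∞)
  set G : ℝ → ℝ := fun y => A y * u y + (A y)^2/4 with hGdef
  have hA' : ∀ t, HasDerivAt A (ddu t * t + du t) t := by
    intro t
    have h1 : HasDerivAt (fun s : ℝ => du s * s) (ddu t * t + du t * 1) t :=
      (hdu' t).mul (hasDerivAt_id t)
    rw [show (fun s : ℝ => du s * s) = (A : ℝ → ℝ) from funext fun s => (hA s).symm] at h1
    convert h1 using 1
    ring
  have hG' : ∀ t, HasDerivAt G (H t + A t * du t) t := by
    intro t
    have h1 := ((hA' t).mul (hu' t)).add (((hA' t).pow 2).div_const 4)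
    refine h1.congr_deriv ?_
    simp only [hHdef, hA]
    push_cast
    ring
  -- Schwartz representations
  set S1 : SchwartzMap ℝ ℝ := mulS (du + xmul ddu) (u + (2:ℝ)⁻¹ • A) with hS1def
  have hS1 : ∀ y, S1 y = H y := by
    intro y
    rw [hS1def, mulS_apply, hHdef]
    simp only [SchwartzMap.add_apply, SchwartzMap.smul_apply, xmul_apply, smul_eq_mul]
    ring
  set S2 : SchwartzMap ℝ ℝ := mulS A du with hS2def
  have hS2 : ∀ y, S2 y = A y * du y := fun y => mulS_apply A du y
  have hHint : IntegrableOn H (Ioi (0:ℝ)) volume := by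
    have := S1.integrable (μ := (volume : Measure ℝ))
    rw [show (S1 : ℝ → ℝ) = H from funext hS1] at this
    exact this.integrableOn
  have hS2int : IntegrableOn (fun y => A y * du y) (Ioi (0:ℝ)) volume := by
    have := S2.integrable (μ := (volume : Measure ℝ))
    rw [show (S2 : ℝ → ℝ) = fun y => A y * du y from funext hS2] at this
    exact this.integrableOn
  have hGtend : Filter.Tendsto G Filter.atTop (nhds 0) := by
    set GS : SchwartzMap ℝ ℝ := mulS A u + (4:ℝ)⁻¹ • (mulS A A) with hGSdef
    have he : (GS : ℝ → ℝ) = G := by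
      funext y
      rw [hGSdef, hGdef]
      simp only [SchwartzMap.add_apply, SchwartzMap.smul_apply, mulS_apply, smul_eq_mul]
      ring
    have := schwartz_tendsto_atTop GS
    rwa [show (fun x => GS x) = G from he] at this
  have hFTC : ∫ y in Ioi (0:ℝ), (H y + A y * du y) = 0 := by
    have h0 : G 0 = 0 := by
      rw [hGdef]; simp [hA]
    rw [integral_Ioi_of_hasDerivAt_of_tendsto
      ((hG' 0).continuousAt.continuousWithinAt)
      (fun x _ => hG' x) ((hHint.add hS2int)) hGtend, h0, sub_zero]
  have hsplit : ∫ y in Ioi (0:ℝ), H y = - ∫ y in Ioi (0:ℝ), A y * du y := by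
    have hadd : ∫ y in Ioi (0:ℝ), (H y + A y * du y)
        = (∫ y in Ioi (0:ℝ), H y) + ∫ y in Ioi (0:ℝ), A y * du y :=
      integral_add hHint hS2int
    linarith [hFTC, hadd]
  -- identify RHS integral
  have hRHS : ∫ ρ in Ioi (0:ℝ), (deriv (fun s => (r s) ^ 2) ρ) ^ 2 * ρ
      = ∫ y in Ioi (0:ℝ), A y * du y := by
    apply setIntegral_congr_fun measurableSet_Ioi
    intro y hy
    have hder : deriv (fun s => (r s) ^ 2) y = du y := by
      have hev : (fun s => (r s) ^ 2) =ᶠ[nhds y] (u : ℝ → ℝ) := by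
        filter_upwards [isOpen_Ioi.mem_nhds hy] with s hs
        have : r s = w s := by
          have h1 := hprof (s • e0)
          rw [norm_smul, norm_e0, mul_one, Real.norm_eq_abs, abs_of_pos hs] at h1
          rw [← h1, hw]
        rw [this, mulS_apply]; ring
      rw [hev.deriv_eq, ← SchwartzMap.derivCLM_apply ℝ u y]
    simp only
    rw [hder, hA]
    ring
  rw [hIoi1, hsplit, hRHS]
  -- final arithmetic
  have hdim : Module.finrank ℝ E2 = 2 := by
    rw [finrank_euclideanSpace, Fintype.card_fin]
  rw [hdim, measureReal_def, vol_ball_E2, ENNReal.toReal_ofReal Real.pi_pos.le]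
  rw [nsmul_eq_mul, smul_eq_mul]
  push_cast
  ring
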